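/- The total variation distance between two product probability measures is at most the sum of the total variation distances between the corresponding factors: ‖⊗_{i=1}^M P_i − ⊗_{i=1}^M Q_i‖ ≤ ∑_{i=1}^M ‖P_i − Q_i‖. -/

import Mathlib

open MeasureTheory ENNReal

/-- One-sided total-variation bound on integrals of `[0,1]`-valued functions. -/
lemma tv_lintegral_le {α : Type*} [MeasurableSpace α] (P Q : Measure α)
    [IsProbabilityMeasure P] [IsProbabilityMeasure Q] {ε : ℝ}
    (h : ∀ s : Set α, MeasurableSet s → ((P s).toReal - (Q s).toReal) ≤ ε)
    (f : α → ℝ≥0∞) (hf1 : ∀ x, f x ≤ 1) :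
    (∫⁻ x, f x ∂P).toReal ≤ (∫⁻ x, f x ∂Q).toReal + ε := by
  obtain ⟨u, hu, h1, h2⟩ := MeasureTheory.hahn_decomposition (μ := P) (ν := Q)
  have hboundP : ∫⁻ x, f x ∂P ≤ 1 := by
    calc ∫⁻ x, f x ∂P ≤ ∫⁻ _, 1 ∂P := lintegral_mono hf1
    _ = 1 := by simp
  have hboundQ : ∫⁻ x, f x ∂Q ≤ 1 := by
    calc ∫⁻ x, f x ∂Q ≤ ∫⁻ _, 1 ∂Q := lintegral_mono hf1
    _ = 1 := by simp
  have hle_c : Q.restrict u ≤ P.restrict u := by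
    rw [Measure.le_iff]
    intro s hs
    rw [Measure.restrict_apply hs, Measure.restrict_apply hs]
    exact h1 _ (hs.inter hu) Set.inter_subset_right
  have hdecomp : P.restrict u - Q.restrict u + Q.restrict u = P.restrict u :=
    Measure.sub_add_cancel_of_le hle_c
  have hdu : (P.restrict u - Q.restrict u) Set.univ = P u - Q u := by
    rw [Measure.sub_apply MeasurableSet.univ hle_c]
    simp
  have hu_int : ∫⁻ x in u, f x ∂P ≤ ∫⁻ x in u, f x ∂Q + (P u - Q u) := by
    calc ∫⁻ x in u, f x ∂P = ∫⁻ x, f x ∂(P.restrict u - Q.restrict u + Q.restrict u) := by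
          rw [hdecomp]
    _ = ∫⁻ x, f x ∂(P.restrict u - Q.restrict u) + ∫⁻ x in u, f x ∂Q :=
          lintegral_add_measure _ _ _
    _ ≤ (P u - Q u) + ∫⁻ x in u, f x ∂Q := by
          gcongr
          calc ∫⁻ x, f x ∂(P.restrict u - Q.restrict u)
              ≤ ∫⁻ _, 1 ∂(P.restrict u - Q.restrict u) := lintegral_mono hf1
            _ = (P.restrict u - Q.restrict u) Set.univ := by simp
            _ = P u - Q u := hdu
    _ = ∫⁻ x in u, f x ∂Q + (P u - Q u) := add_comm _ _
  have huc_le : P.restrict uᶜ ≤ Q.restrict uᶜ := by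
    rw [Measure.le_iff]
    intro s hs
    rw [Measure.restrict_apply hs, Measure.restrict_apply hs]
    exact h2 _ (hs.inter hu.compl) Set.inter_subset_right
  have huc_int : ∫⁻ x in uᶜ, f x ∂P ≤ ∫⁻ x in uᶜ, f x ∂Q := lintegral_mono' huc_le le_rfl
  have key : ∫⁻ x, f x ∂P ≤ ∫⁻ x, f x ∂Q + (P u - Q u) := by
    calc ∫⁻ x, f x ∂P = ∫⁻ x in u, f x ∂P + ∫⁻ x in uᶜ, f x ∂P :=
          (lintegral_add_compl f hu).symm
    _ ≤ (∫⁻ x in u, f x ∂Q + (P u - Q u)) + ∫⁻ x in uᶜ, f x ∂Q := by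
          gcongr
    _ = (∫⁻ x in u, f x ∂Q + ∫⁻ x in uᶜ, f x ∂Q) + (P u - Q u) := by ring
    _ = ∫⁻ x, f x ∂Q + (P u - Q u) := by rw [lintegral_add_compl f hu]
  have hQu_le : Q u ≤ P u := h1 u hu subset_rfl
  have hPu_ne : P u ≠ ⊤ := measure_ne_top _ _
  have hsub_ne : P u - Q u ≠ ⊤ := by
    exact ne_top_of_le_ne_top hPu_ne tsub_le_self
  have hQ_ne : ∫⁻ x, f x ∂Q ≠ ⊤ := ne_top_of_le_ne_top one_ne_top hboundQ
  have hP_ne : ∫⁻ x, f x ∂P ≠ ⊤ := ne_top_of_le_ne_top one_ne_top hboundP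
  have : (∫⁻ x, f x ∂P).toReal ≤ (∫⁻ x, f x ∂Q + (P u - Q u)).toReal :=
    ENNReal.toReal_mono (ENNReal.add_ne_top.2 ⟨hQ_ne, hsub_ne⟩) key
  rw [ENNReal.toReal_add hQ_ne hsub_ne, ENNReal.toReal_sub_of_le hQu_le hPu_ne] at this
  have h2' := h u hu
  linarith

/-- One-sided pointwise comparison of integrals of `[0,1]`-valued functions. -/
lemma lintegral_le_of_toReal_le {α : Type*} [MeasurableSpace α] (μ : Measure α)
    [IsProbabilityMeasure μ] {f g : α → ℝ≥0∞} (hf1 : ∀ x, f x ≤ 1) (hg1 : ∀ x, g x ≤ 1)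
    {c : ℝ} (hc : 0 ≤ c) (h : ∀ x, (f x).toReal ≤ (g x).toReal + c) :
    (∫⁻ x, f x ∂μ).toReal ≤ (∫⁻ x, g x ∂μ).toReal + c := by
  have hpt : ∀ x, f x ≤ g x + ENNReal.ofReal c := by
    intro x
    have hfne : f x ≠ ⊤ := ne_top_of_le_ne_top one_ne_top (hf1 x)
    have hgne : g x ≠ ⊤ := ne_top_of_le_ne_top one_ne_top (hg1 x)
    rw [← ENNReal.ofReal_toReal hfne, ← ENNReal.ofReal_toReal hgne,
      ← ENNReal.ofReal_add ENNReal.toReal_nonneg hc]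
    exact ENNReal.ofReal_le_ofReal (h x)
  have key : ∫⁻ x, f x ∂μ ≤ ∫⁻ x, g x ∂μ + ENNReal.ofReal c := by
    calc ∫⁻ x, f x ∂μ ≤ ∫⁻ x, g x + ENNReal.ofReal c ∂μ := lintegral_mono hpt
    _ = ∫⁻ x, g x ∂μ + ENNReal.ofReal c := by
        rw [lintegral_add_right _ measurable_const]; simp
  have hg_ne : ∫⁻ x, g x ∂μ ≠ ⊤ := by
    refine ne_top_of_le_ne_top one_ne_top ?_
    calc ∫⁻ x, g x ∂μ ≤ ∫⁻ _, 1 ∂μ := lintegral_mono hg1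
    _ = 1 := by simp
  have := ENNReal.toReal_mono (ENNReal.add_ne_top.2 ⟨hg_ne, ENNReal.ofReal_ne_top⟩) key
  rw [ENNReal.toReal_add hg_ne ENNReal.ofReal_ne_top, ENNReal.toReal_ofReal hc] at this
  exact this


universe u

lemma tv_pi_aux : ∀ (M : ℕ) (X : Fin M → Type u) (_ : ∀ i, MeasurableSpace (X i))
    (P Q : ∀ i, Measure (X i)) (_ : ∀ i, IsProbabilityMeasure (P i))
    (_ : ∀ i, IsProbabilityMeasure (Q i)) (ε : Fin M → ℝ)
    (_ : ∀ i, ∀ s : Set (X i), MeasurableSet s → |((P i) s).toReal - ((Q i) s).toReal| ≤ ε i)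
    (A : Set (∀ i, X i)) (_ : MeasurableSet A),
    |((Measure.pi P) A).toReal - ((Measure.pi Q) A).toReal| ≤ ∑ i, ε i := by
  intro M
  induction M with
  | zero =>
    intro X mX P Q hP hQ ε h A hA
    by_cases hmem : (fun i => (i : Fin 0).elim0) ∈ A
    · have hAu : A = Set.univ := by
        ext x
        simp only [Set.mem_univ, iff_true]
        have : x = fun i => (i : Fin 0).elim0 := by
          funext i; exact i.elim0
        rwa [this]
      haveI := hP; haveI := hQ
      simp [hAu]
    · have hAe : A = ∅ := by
        ext x
        simp only [Set.mem_empty_iff_false, iff_false]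
        intro hx
        have : x = fun i => (i : Fin 0).elim0 := by
          funext i; exact i.elim0
        rw [this] at hx; exact hmem hx
      simp [hAe]
  | succ n ih =>
    intro X mX P Q hP hQ ε h A hA
    haveI := hP; haveI := hQ
    set e := MeasurableEquiv.piFinSuccAbove X 0 with he
    set B := e.symm ⁻¹' A with hBdef
    have hB : MeasurableSet B := e.symm.measurable hA
    have heA : e ⁻¹' B = A := by
      rw [hBdef, ← Set.preimage_comp]
      rw [MeasurableEquiv.symm_comp_self, Set.preimage_id]
    set σP := Measure.pi fun j => P ((0 : Fin (n+1)).succAbove j) with hσP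
    set σQ := Measure.pi fun j => Q ((0 : Fin (n+1)).succAbove j) with hσQ
    haveI : IsProbabilityMeasure σP := by rw [hσP]; infer_instance
    haveI : IsProbabilityMeasure σQ := by rw [hσQ]; infer_instance
    have hPA : (Measure.pi P) A = ((P 0).prod σP) B := by
      rw [← heA]
      exact (measurePreserving_piFinSuccAbove P 0).measure_preimage_equiv B
    have hQA : (Measure.pi Q) A = ((Q 0).prod σQ) B := by
      rw [← heA]
      exact (measurePreserving_piFinSuccAbove Q 0).measure_preimage_equiv B
    -- sections
    have hsec : ∀ x, MeasurableSet (Prod.mk x ⁻¹' B) := fun x => measurable_prodMk_left hB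
    have hfP1 : ∀ x, σP (Prod.mk x ⁻¹' B) ≤ 1 := fun x => prob_le_one
    have hfQ1 : ∀ x, σQ (Prod.mk x ⁻¹' B) ≤ 1 := fun x => prob_le_one
    have hprodP : ((P 0).prod σP) B = ∫⁻ x, σP (Prod.mk x ⁻¹' B) ∂(P 0) :=
      Measure.prod_apply hB
    have hprodQP : ((Q 0).prod σP) B = ∫⁻ x, σP (Prod.mk x ⁻¹' B) ∂(Q 0) :=
      Measure.prod_apply hB
    have hprodQQ : ((Q 0).prod σQ) B = ∫⁻ x, σQ (Prod.mk x ⁻¹' B) ∂(Q 0) :=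
      Measure.prod_apply hB
    have hε0 : ∀ s : Set (X 0), MeasurableSet s →
        ((P 0) s).toReal - ((Q 0) s).toReal ≤ ε 0 :=
      fun s hs => (abs_le.mp (h 0 s hs)).2
    have hε0' : ∀ s : Set (X 0), MeasurableSet s →
        ((Q 0) s).toReal - ((P 0) s).toReal ≤ ε 0 :=
      fun s hs => by have := (abs_le.mp (h 0 s hs)).1; linarith
    have step1 : |(((P 0).prod σP) B).toReal - (((Q 0).prod σP) B).toReal| ≤ ε 0 := by
      rw [hprodP, hprodQP, abs_sub_le_iff]
      constructor
      · have := tv_lintegral_le (P 0) (Q 0) hε0 (fun x => σP (Prod.mk x ⁻¹' B)) hfP1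
        linarith
      · have := tv_lintegral_le (Q 0) (P 0) hε0' (fun x => σP (Prod.mk x ⁻¹' B)) hfP1
        linarith
    -- induction step
    set c := ∑ j : Fin n, ε ((0 : Fin (n+1)).succAbove j) with hc
    have hεnn : ∀ i, 0 ≤ ε i := by
      intro i
      have := h i ∅ MeasurableSet.empty
      simpa using le_trans (abs_nonneg _) this
    have hcnn : 0 ≤ c := Finset.sum_nonneg fun j _ => hεnn _
    have hih : ∀ x, |(σP (Prod.mk x ⁻¹' B)).toReal - (σQ (Prod.mk x ⁻¹' B)).toReal| ≤ c := by
      intro x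
      exact ih (fun j => X ((0 : Fin (n+1)).succAbove j)) _
        (fun j => P ((0 : Fin (n+1)).succAbove j)) (fun j => Q ((0 : Fin (n+1)).succAbove j))
        (fun j => inferInstance) (fun j => inferInstance)
        (fun j => ε ((0 : Fin (n+1)).succAbove j))
        (fun j s hs => h _ s hs) _ (hsec x)
    have step2 : |(((Q 0).prod σP) B).toReal - (((Q 0).prod σQ) B).toReal| ≤ c := by
      rw [hprodQP, hprodQQ, abs_sub_le_iff]
      constructor
      · have := lintegral_le_of_toReal_le (Q 0) hfP1 hfQ1 hcnn
          fun x => by have := (abs_le.mp (hih x)).2; linarith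
        linarith
      · have := lintegral_le_of_toReal_le (Q 0) hfQ1 hfP1 hcnn
          fun x => by have := (abs_le.mp (hih x)).1; linarith
        linarith
    have hsum : ∑ i, ε i = ε 0 + c := Fin.sum_univ_succAbove ε 0
    rw [hPA, hQA, hsum]
    calc |(((P 0).prod σP) B).toReal - (((Q 0).prod σQ) B).toReal|
        ≤ |(((P 0).prod σP) B).toReal - (((Q 0).prod σP) B).toReal|
          + |(((Q 0).prod σP) B).toReal - (((Q 0).prod σQ) B).toReal| := abs_sub_le _ _ _
      _ ≤ ε 0 + c := add_le_add step1 step2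

theorem tv_pi_le_sum_tv {M : ℕ} {X : Fin M → Type*} [∀ i, MeasurableSpace (X i)]
    (P Q : ∀ i, Measure (X i)) [∀ i, IsProbabilityMeasure (P i)]
    [∀ i, IsProbabilityMeasure (Q i)] (ε : Fin M → ℝ)
    (h : ∀ i, ∀ s : Set (X i), MeasurableSet s → |((P i) s).toReal - ((Q i) s).toReal| ≤ ε i)
    (A : Set (∀ i, X i)) (hA : MeasurableSet A) :
    |((Measure.pi P) A).toReal - ((Measure.pi Q) A).toReal| ≤ ∑ i, ε i :=
  tv_pi_aux M X _ P Q (fun i => inferInstance) (fun i => inferInstance) ε h A hA
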